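/- Let α, β > -1 with min(α,β) < -1/2. Then the modified moments M_m(α,β) = ∫_{-1}^{1}(1-x)^α(1+x)^β T_m(x)dx satisfy M_m(α,β) = O(m^{-2-2min(α,β)}) as m → ∞; i.e., there exists a constant C such that |M_m(α,β)| ≤ C·m^{-2-2min(α,β)} for all m ≥ 1. -/

import Mathlib

open Polynomial Polynomial.Chebyshev Real MeasureTheory intervalIntegral

noncomputable def Sfun (m : ℕ) (x : ℝ) : ℝ :=
  (T ℝ ((m:ℤ)+1)).eval x / (2*(m+1)) - (T ℝ ((m:ℤ)-1)).eval x / (2*(m-1))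
noncomputable def wfun (α β : ℝ) (x : ℝ) : ℝ := (1-x)^α * (1+x)^β
noncomputable def wfun' (α β : ℝ) (x : ℝ) : ℝ :=
  -1*α*(1-x)^(α-1) * (1+x)^β + (1-x)^α * (1*β*(1+x)^(β-1))


lemma abs_T_le_one (n : ℤ) {x : ℝ} (h1 : -1 ≤ x) (h2 : x ≤ 1) :
    |(T ℝ n).eval x| ≤ 1 := by
  have h := T_real_cos (Real.arccos x) n
  rw [Real.cos_arccos h1 h2] at h
  rw [h]; exact Real.abs_cos_le_one _

lemma U_mul_sin (n : ℤ) (θ : ℝ) : (U ℝ n).eval (cos θ) * sin θ = sin ((n+1) * θ) :=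
  U_real_cos θ n

lemma Sfun_eq {m : ℕ} (hm : 2 ≤ m) {x : ℝ} (h1 : -1 ≤ x) (h2 : x ≤ 1) :
    Sfun m x = -(cos (m * arccos x) * x) / ((m:ℝ)^2 - 1)
      - (m:ℝ) * (sin (m * arccos x) * sin (arccos x)) / ((m:ℝ)^2 - 1) := by
  have hm1 : (1:ℝ) ≤ m := by exact_mod_cast Nat.one_le_of_lt hm
  have hm2 : (2:ℝ) ≤ m := by exact_mod_cast hm
  set θ := arccos x with hθ
  have hx : x = cos θ := (Real.cos_arccos h1 h2).symm
  have e1 : (T ℝ ((m:ℤ)+1)).eval x = cos ((m+1) * θ) := by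
    rw [hx, T_real_cos]; push_cast; ring_nf
  have e2 : (T ℝ ((m:ℤ)-1)).eval x = cos ((m-1) * θ) := by
    rw [hx, T_real_cos]; push_cast; ring_nf
  have c1 : cos (((m:ℝ)+1) * θ) = cos (m*θ) * cos θ - sin (m*θ) * sin θ := by
    rw [add_mul, one_mul, Real.cos_add]
  have c2 : cos (((m:ℝ)-1) * θ) = cos (m*θ) * cos θ + sin (m*θ) * sin θ := by
    rw [sub_mul, one_mul, Real.cos_sub]
  rw [Sfun, e1, e2, c1, c2, hx]
  have h3 : (m:ℝ) + 1 ≠ 0 := by positivity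
  have h4 : (m:ℝ) - 1 ≠ 0 := by nlinarith
  have h5 : (m:ℝ)^2 - 1 ≠ 0 := by nlinarith
  field_simp
  ring

lemma abs_Sfun_le {m : ℕ} (hm : 2 ≤ m) {x : ℝ} (h1 : -1 ≤ x) (h2 : x ≤ 1) :
    |Sfun m x| ≤ 2/(m:ℝ)^2 + 2 * Real.sqrt (1-x) * Real.sqrt (1+x) / m := by
  have hm2 : (2:ℝ) ≤ m := by exact_mod_cast hm
  have hmsq : (2:ℝ) ≤ (m:ℝ)^2 - 1 := by nlinarith
  have h5 : (0:ℝ) < (m:ℝ)^2 - 1 := by linarith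
  have hhalf : (m:ℝ)^2/2 ≤ (m:ℝ)^2 - 1 := by nlinarith
  rw [Sfun_eq hm h1 h2]
  have hs : sin (arccos x) = Real.sqrt (1-x) * Real.sqrt (1+x) := by
    rw [Real.sin_arccos, show 1 - x^2 = (1-x)*(1+x) by ring,
      Real.sqrt_mul (by linarith)]
  have hb1 : |(-(cos (m * arccos x) * x) / ((m:ℝ)^2 - 1))| ≤ 2/(m:ℝ)^2 := by
    rw [abs_div, abs_of_pos h5, div_le_div_iff₀ h5 (by positivity)]
    have : |(-(cos (m * arccos x) * x))| ≤ 1 := by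
      rw [abs_neg, abs_mul]
      have := Real.abs_cos_le_one ((m:ℝ) * arccos x)
      have hx : |x| ≤ 1 := abs_le.2 ⟨h1, h2⟩
      nlinarith [abs_nonneg x, abs_nonneg (cos ((m:ℝ) * arccos x))]
    nlinarith
  have hb2 : |(m:ℝ) * (sin (m * arccos x) * sin (arccos x)) / ((m:ℝ)^2 - 1)|
      ≤ 2 * Real.sqrt (1-x) * Real.sqrt (1+x) / m := by
    rw [abs_div, abs_of_pos h5, div_le_div_iff₀ h5 (by positivity)]
    have hsin : 0 ≤ sin (arccos x) := Real.sin_nonneg_of_mem_Icc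
      ⟨Real.arccos_nonneg x, (Real.arccos_le_pi x)⟩
    have h6 : |(m:ℝ) * (sin (m * arccos x) * sin (arccos x))|
        ≤ (m:ℝ) * sin (arccos x) := by
      rw [abs_mul, abs_mul, Nat.abs_cast, abs_of_nonneg hsin]
      have := Real.abs_sin_le_one ((m:ℝ) * arccos x)
      have h0 : (0:ℝ) ≤ (m:ℝ) := by positivity
      nlinarith [abs_nonneg (sin ((m:ℝ)*arccos x)),
        mul_le_of_le_one_left hsin this]
    calc |(m:ℝ) * (sin (m * arccos x) * sin (arccos x))| * (m:ℝ)
        ≤ ((m:ℝ) * sin (arccos x)) * m := by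
          apply mul_le_mul_of_nonneg_right h6 (by positivity)
      _ = sin (arccos x) * (m:ℝ)^2 := by ring
      _ ≤ 2 * Real.sqrt (1-x) * Real.sqrt (1+x) * ((m:ℝ)^2-1) := by
          rw [hs]
          nlinarith [Real.sqrt_nonneg (1-x), Real.sqrt_nonneg (1+x),
            mul_nonneg (Real.sqrt_nonneg (1-x)) (Real.sqrt_nonneg (1+x))]
  calc |_ - _| ≤ _ + _ := abs_sub _ _
    _ ≤ 2/(m:ℝ)^2 + 2 * Real.sqrt (1-x) * Real.sqrt (1+x) / m := add_le_add hb1 hb2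

lemma hasDerivAt_Sfun {m : ℕ} (hm : 2 ≤ m) {x : ℝ} (h1 : -1 < x) (h2 : x < 1) :
    HasDerivAt (Sfun m) ((T ℝ (m:ℤ)).eval x) x := by
  have hm2 : (2:ℝ) ≤ m := by exact_mod_cast hm
  have d1 : HasDerivAt (fun y => (T ℝ ((m:ℤ)+1)).eval y / (2*((m:ℝ)+1)))
      ((derivative (T ℝ ((m:ℤ)+1))).eval x / (2*((m:ℝ)+1))) x :=
    (Polynomial.hasDerivAt _ x).div_const _
  have d2 : HasDerivAt (fun y => (T ℝ ((m:ℤ)-1)).eval y / (2*((m:ℝ)-1)))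
      ((derivative (T ℝ ((m:ℤ)-1))).eval x / (2*((m:ℝ)-1))) x :=
    (Polynomial.hasDerivAt _ x).div_const _
  have hd := d1.sub d2
  have key : (derivative (T ℝ ((m:ℤ)+1))).eval x / (2*((m:ℝ)+1))
      - (derivative (T ℝ ((m:ℤ)-1))).eval x / (2*((m:ℝ)-1))
      = (T ℝ (m:ℤ)).eval x := by
    rw [T_derivative_eq_U, T_derivative_eq_U]
    simp only [Polynomial.eval_mul, Polynomial.eval_intCast]
    push_cast
    have hne1 : (m:ℝ) + 1 ≠ 0 := by positivity
    have hne2 : (m:ℝ) - 1 ≠ 0 := by nlinarith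
    rw [show (m:ℤ)+1-1 = (m:ℤ) from by ring, show (m:ℤ)-1-1 = (m:ℤ)-2 from by ring]
    have hU : (U ℝ (m:ℤ)).eval x - (U ℝ ((m:ℤ)-2)).eval x
        = 2 * (T ℝ (m:ℤ)).eval x := by
      set θ := arccos x with hθ
      have hx : x = cos θ := (Real.cos_arccos h1.le h2.le).symm
      have hsin : 0 < sin θ := by
        rw [hθ, Real.sin_arccos]
        have : 0 < 1 - x^2 := by nlinarith
        positivity
      apply mul_right_cancel₀ (ne_of_gt hsin)
      rw [sub_mul, hx, U_real_cos, U_real_cos, mul_assoc,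
        mul_comm ((T ℝ (m:ℤ)).eval (cos θ)), ← mul_assoc, T_real_cos]
      push_cast
      rw [show ((m:ℝ)+1) = m + 1 by ring, show ((m:ℝ)-2+1) = m - 1 by ring,
        add_mul, sub_mul, one_mul, Real.sin_add, Real.sin_sub]
      ring
    field_simp
    linear_combination hU
  rw [← key]
  exact hd

lemma hasDerivAt_wfun (α β : ℝ) {x : ℝ} (h1 : -1 < x) (h2 : x < 1) :
    HasDerivAt (wfun α β) (wfun' α β x) x := by
  unfold wfun wfun'
  have ha : HasDerivAt (fun y : ℝ => 1 - y) (-1) x := by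
    simpa using (hasDerivAt_id x).const_sub 1
  have hb : HasDerivAt (fun y : ℝ => 1 + y) 1 x := by
    simpa using (hasDerivAt_id x).const_add 1
  have ha' := ha.rpow_const (p := α) (Or.inl (by intro h; nlinarith [h]))
  have hb' := hb.rpow_const (p := β) (Or.inl (by intro h; nlinarith [h]))
  exact ha'.mul hb'

lemma intInt_one_sub {p : ℝ} (hp : -1 < p) (c : ℝ) :
    IntervalIntegrable (fun x => (1-x)^p) volume c 1 := by
  have h := (intervalIntegrable_rpow' (a := 0) (b := 1-c) hp).comp_sub_left 1
  simpa using h.symm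

lemma intInt_one_sub' (p : ℝ) {c d : ℝ} (hc : c < 1) (hd : d < 1) :
    IntervalIntegrable (fun x => (1-x)^p) volume c d := by
  have h0 : (0:ℝ) ∉ Set.uIcc (1-c) (1-d) := by
    intro h
    rcases Set.mem_uIcc.1 h with ⟨h1, _⟩ | ⟨h1, _⟩ <;> linarith
  have h := (intervalIntegrable_rpow (r := p) (a := 1-c) (b := 1-d)
    (Or.inr h0)).comp_sub_left 1
  simpa using h

lemma integral_one_sub_rpow {p : ℝ} {c d : ℝ}
    (h : -1 < p ∨ (p ≠ -1 ∧ c < 1 ∧ d < 1)) :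
    ∫ x in c..d, (1-x)^p = ((1-c)^(p+1) - (1-d)^(p+1))/(p+1) := by
  have h1 : (∫ x in c..d, (1-x)^p) = ∫ x in 1-d..1-c, x^p := by
    simpa using intervalIntegral.integral_comp_sub_left (fun x => x^p) 1 (a := c) (b := d)
  have h' : -1 < p ∨ p ≠ -1 ∧ (0:ℝ) ∉ Set.uIcc (1-d) (1-c) := by
    rcases h with h | ⟨hh1, hh2, hh3⟩
    · exact Or.inl h
    · refine Or.inr ⟨hh1, ?_⟩
      intro hmem
      rcases Set.mem_uIcc.1 hmem with ⟨ha, _⟩ | ⟨ha, _⟩ <;> linarith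
  rw [h1, integral_rpow h']

lemma intInt_one_add {p : ℝ} (hp : -1 < p) (c : ℝ) :
    IntervalIntegrable (fun x => (1+x)^p) volume (-1) c := by
  have h := ((IntervalIntegrable.iff_comp_neg (by simp)).mp (intInt_one_sub hp (-c))).symm
  simpa [sub_neg_eq_add] using h

lemma intInt_one_add' (p : ℝ) {c d : ℝ} (hc : -1 < c) (hd : -1 < d) :
    IntervalIntegrable (fun x => (1+x)^p) volume c d := by
  have h := (IntervalIntegrable.iff_comp_neg (by simp)).mp
    (intInt_one_sub' p (c := -c) (d := -d) (by linarith) (by linarith))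
  simpa [sub_neg_eq_add] using h

lemma integral_one_add_rpow {p : ℝ} {c d : ℝ}
    (h : -1 < p ∨ (p ≠ -1 ∧ -1 < c ∧ -1 < d)) :
    ∫ x in c..d, (1+x)^p = ((1+d)^(p+1) - (1+c)^(p+1))/(p+1) := by
  have h1 : (∫ x in c..d, (1+x)^p) = ∫ x in -d..-c, (1-x)^p := by
    rw [← intervalIntegral.integral_comp_neg (fun x => (1-x)^p)]
    simp [sub_neg_eq_add]
  rw [h1, integral_one_sub_rpow]
  · rw [show 1 - -d = 1 + d by ring, show 1 - -c = 1 + c by ring]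
  · rcases h with h | ⟨h1, h2, h3⟩
    · exact Or.inl h
    · exact Or.inr ⟨h1, by linarith, by linarith⟩

lemma rpow_le_max {t p : ℝ} (h1 : 1 ≤ t) (h2 : t ≤ 2) : t^p ≤ max 1 (2^p) := by
  rcases le_or_gt 0 p with hp | hp
  · exact le_max_of_le_right (Real.rpow_le_rpow (by linarith) h2 hp)
  · exact le_max_of_le_left (Real.rpow_le_one_of_one_le_of_nonpos h1 hp.le)

lemma rpow_scale {t p q : ℝ} (ht : 0 < t) (h2 : t ≤ 2) (hpq : q ≤ p) :
    t^p ≤ 2^(p-q) * t^q := by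
  have : t^p = t^(p-q) * t^q := by
    rw [← Real.rpow_add ht]; ring_nf
  rw [this]
  exact mul_le_mul_of_nonneg_right
    (Real.rpow_le_rpow ht.le h2 (by linarith)) (Real.rpow_nonneg ht.le q)

lemma wfun'_bound_right (α β : ℝ) {x : ℝ} (hx0 : 0 ≤ x) (hx1 : x < 1) :
    |wfun' α β x| ≤ 2^(α-min α β) * (|α| * max 1 (2^β) + |β| * max 1 (2^(β-1)))
      * (1-x)^(min α β - 1) := by
  set μ := min α β with hμdef
  have h1x : 0 < 1-x := by linarith
  have h1x2 : (1:ℝ)-x ≤ 2 := by linarith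
  have h1x1 : (1:ℝ)-x ≤ 1 := by linarith
  have hx1' : (1:ℝ) ≤ 1+x := by linarith
  have hx2 : (1:ℝ)+x ≤ 2 := by linarith
  have e1 : |wfun' α β x| ≤ |α| * (1-x)^(α-1) * (1+x)^β + (1-x)^α * (|β| * (1+x)^(β-1)) := by
    refine (abs_add_le _ _).trans ?_
    rw [abs_mul, abs_mul, abs_mul, abs_mul, abs_mul,
      abs_of_nonneg (Real.rpow_nonneg h1x.le (α-1)),
      abs_of_nonneg (Real.rpow_nonneg (by linarith : (0:ℝ) ≤ 1+x) β),
      abs_of_nonneg (Real.rpow_nonneg h1x.le α),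
      abs_of_nonneg (Real.rpow_nonneg (by linarith : (0:ℝ) ≤ 1+x) (β-1))]
    simp [abs_mul]
  have t1 : |α| * (1-x)^(α-1) * (1+x)^β
      ≤ |α| * (2^(α-μ) * (1-x)^(μ-1)) * max 1 (2^β) := by
    have ha : (1-x)^(α-1) ≤ 2^((α-1)-(μ-1)) * (1-x)^(μ-1) :=
      rpow_scale h1x h1x2 (by simp [hμdef, min_le_left, sub_le_sub_right]
        : μ - 1 ≤ α - 1)
    rw [show (α-1)-(μ-1) = α - μ by ring] at ha
    have hb : (1+x)^β ≤ max 1 (2^β) := rpow_le_max hx1' hx2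
    have h2 : (0:ℝ) ≤ 2^(α-μ) * (1-x)^(μ-1) :=
      mul_nonneg (Real.rpow_nonneg (by norm_num) _) (Real.rpow_nonneg h1x.le _)
    gcongr
  have t2 : (1-x)^α * (|β| * (1+x)^(β-1))
      ≤ (2^(α-μ) * (1-x)^(μ-1)) * (|β| * max 1 (2^(β-1))) := by
    have ha : (1-x)^α ≤ 2^(α-μ) * (1-x)^μ :=
      rpow_scale h1x h1x2 (min_le_left _ _)
    have ha2 : (1-x)^μ ≤ (1-x)^(μ-1) :=
      Real.rpow_le_rpow_of_exponent_ge h1x h1x1 (by linarith)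
    have ha3 : (1-x)^α ≤ 2^(α-μ) * (1-x)^(μ-1) :=
      ha.trans (by gcongr)
    have hb : (1+x)^(β-1) ≤ max 1 (2^(β-1)) := rpow_le_max hx1' hx2
    have h2 : (0:ℝ) ≤ 2^(α-μ) * (1-x)^(μ-1) :=
      mul_nonneg (Real.rpow_nonneg (by norm_num) _) (Real.rpow_nonneg h1x.le _)
    gcongr
  calc |wfun' α β x| ≤ |α| * (1-x)^(α-1) * (1+x)^β + (1-x)^α * (|β| * (1+x)^(β-1)) := e1
    _ ≤ |α| * (2^(α-μ) * (1-x)^(μ-1)) * max 1 (2^β)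
        + (2^(α-μ) * (1-x)^(μ-1)) * (|β| * max 1 (2^(β-1))) := add_le_add t1 t2
    _ = 2^(α-μ) * (|α| * max 1 (2^β) + |β| * max 1 (2^(β-1))) * (1-x)^(μ-1) := by
        ring

lemma wfun'_bound_left (α β : ℝ) {x : ℝ} (hx0 : -1 < x) (hx1 : x ≤ 0) :
    |wfun' α β x| ≤ 2^(β-min α β) * (|α| * max 1 (2^(α-1)) + |β| * max 1 (2^α))
      * (1+x)^(min α β - 1) := by
  set μ := min α β with hμdef
  have h1x : 0 < 1+x := by linarith
  have h1x2 : (1:ℝ)+x ≤ 2 := by linarith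
  have h1x1 : (1:ℝ)+x ≤ 1 := by linarith
  have hx1' : (1:ℝ) ≤ 1-x := by linarith
  have hx2 : (1:ℝ)-x ≤ 2 := by linarith
  have e1 : |wfun' α β x| ≤ |α| * (1-x)^(α-1) * (1+x)^β
      + (1-x)^α * (|β| * (1+x)^(β-1)) := by
    refine (abs_add_le _ _).trans ?_
    rw [abs_mul, abs_mul, abs_mul, abs_mul, abs_mul,
      abs_of_nonneg (Real.rpow_nonneg (by linarith : (0:ℝ) ≤ 1-x) (α-1)),
      abs_of_nonneg (Real.rpow_nonneg h1x.le β),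
      abs_of_nonneg (Real.rpow_nonneg (by linarith : (0:ℝ) ≤ 1-x) α),
      abs_of_nonneg (Real.rpow_nonneg h1x.le (β-1))]
    simp [abs_mul]
  have t1 : |α| * (1-x)^(α-1) * (1+x)^β
      ≤ |α| * max 1 (2^(α-1)) * (2^(β-μ) * (1+x)^(μ-1)) := by
    have ha : (1-x)^(α-1) ≤ max 1 (2^(α-1)) := rpow_le_max hx1' hx2
    have hb : (1+x)^β ≤ 2^(β-μ) * (1+x)^μ := rpow_scale h1x h1x2 (min_le_right _ _)
    have hb2 : (1+x)^μ ≤ (1+x)^(μ-1) :=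
      Real.rpow_le_rpow_of_exponent_ge h1x h1x1 (by linarith)
    have hb3 : (1+x)^β ≤ 2^(β-μ) * (1+x)^(μ-1) := hb.trans (by gcongr)
    gcongr
  have t2 : (1-x)^α * (|β| * (1+x)^(β-1))
      ≤ max 1 (2^α) * (|β| * (2^(β-μ) * (1+x)^(μ-1))) := by
    have ha : (1-x)^α ≤ max 1 (2^α) := rpow_le_max hx1' hx2
    have hb : (1+x)^(β-1) ≤ 2^((β-1)-(μ-1)) * (1+x)^(μ-1) :=
      rpow_scale h1x h1x2 (by simp [hμdef, min_le_right, sub_le_sub_right]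
        : μ - 1 ≤ β - 1)
    rw [show (β-1)-(μ-1) = β - μ by ring] at hb
    gcongr
  calc |wfun' α β x| ≤ |α| * (1-x)^(α-1) * (1+x)^β
        + (1-x)^α * (|β| * (1+x)^(β-1)) := e1
    _ ≤ |α| * max 1 (2^(α-1)) * (2^(β-μ) * (1+x)^(μ-1))
        + max 1 (2^α) * (|β| * (2^(β-μ) * (1+x)^(μ-1))) := add_le_add t1 t2
    _ = 2^(β-μ) * (|α| * max 1 (2^(α-1)) + |β| * max 1 (2^α)) * (1+x)^(μ-1) := by
        ring

lemma meas_f (α β : ℝ) (m : ℤ) :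
    Measurable (fun x : ℝ => (1-x)^α * (1+x)^β * (T ℝ m).eval x) :=
  (((measurable_const.sub measurable_id).pow_const α).mul
    ((measurable_const.add measurable_id).pow_const β)).mul
    (T ℝ m).continuous_aeval.measurable

lemma f_bound_right (α β : ℝ) (m : ℤ) {x : ℝ} (hx0 : 0 ≤ x) (hx1 : x ≤ 1) :
    ‖(1-x)^α * (1+x)^β * (T ℝ m).eval x‖ ≤ max 1 (2^β) * (1-x)^α := by
  rw [Real.norm_eq_abs, abs_mul, abs_mul,
    abs_of_nonneg (Real.rpow_nonneg (by linarith : (0:ℝ) ≤ 1-x) α),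
    abs_of_nonneg (Real.rpow_nonneg (by linarith : (0:ℝ) ≤ 1+x) β)]
  have h1 : (1+x)^β ≤ max 1 (2^β) := rpow_le_max (by linarith) (by linarith)
  have h2 : |(T ℝ m).eval x| ≤ 1 := abs_T_le_one m (by linarith) hx1
  have h3 : (0:ℝ) ≤ (1-x)^α := Real.rpow_nonneg (by linarith) α
  have h4 : (0:ℝ) ≤ (1+x)^β := Real.rpow_nonneg (by linarith) β
  calc (1-x)^α * (1+x)^β * |(T ℝ m).eval x| ≤ (1-x)^α * max 1 (2^β) * 1 := by
        apply mul_le_mul (mul_le_mul_of_nonneg_left h1 h3) h2 (abs_nonneg _)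
        positivity
    _ = max 1 (2^β) * (1-x)^α := by ring

lemma f_bound_left (α β : ℝ) (m : ℤ) {x : ℝ} (hx0 : -1 ≤ x) (hx1 : x ≤ 0) :
    ‖(1-x)^α * (1+x)^β * (T ℝ m).eval x‖ ≤ max 1 (2^α) * (1+x)^β := by
  rw [Real.norm_eq_abs, abs_mul, abs_mul,
    abs_of_nonneg (Real.rpow_nonneg (by linarith : (0:ℝ) ≤ 1-x) α),
    abs_of_nonneg (Real.rpow_nonneg (by linarith : (0:ℝ) ≤ 1+x) β)]
  have h1 : (1-x)^α ≤ max 1 (2^α) := rpow_le_max (by linarith) (by linarith)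
  have h2 : |(T ℝ m).eval x| ≤ 1 := abs_T_le_one m hx0 (by linarith)
  have h3 : (0:ℝ) ≤ (1-x)^α := Real.rpow_nonneg (by linarith) α
  have h4 : (0:ℝ) ≤ (1+x)^β := Real.rpow_nonneg (by linarith) β
  calc (1-x)^α * (1+x)^β * |(T ℝ m).eval x| ≤ max 1 (2^α) * (1+x)^β * 1 := by
        apply mul_le_mul (mul_le_mul_of_nonneg_right h1 h4) h2 (abs_nonneg _)
        positivity
    _ = max 1 (2^α) * (1+x)^β := by ring

lemma intInt_f_right (α β : ℝ) (hα : -1 < α) (m : ℤ) {c : ℝ} (hc : 0 ≤ c) (hc1 : c ≤ 1) :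
    IntervalIntegrable (fun x => (1-x)^α * (1+x)^β * (T ℝ m).eval x) volume c 1 := by
  apply IntervalIntegrable.mono_fun' ((intInt_one_sub hα c).const_mul (max 1 (2^β)))
    (meas_f α β m).aestronglyMeasurable.restrict
  filter_upwards [ae_restrict_mem measurableSet_uIoc] with x hx
  rw [Set.uIoc_of_le hc1] at hx
  exact f_bound_right α β m (le_trans hc hx.1.le) hx.2

lemma intInt_f_left (α β : ℝ) (hβ : -1 < β) (m : ℤ) {c : ℝ} (hc : -1 ≤ c) (hc1 : c ≤ 0) :
    IntervalIntegrable (fun x => (1-x)^α * (1+x)^β * (T ℝ m).eval x) volume (-1) c := by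
  apply IntervalIntegrable.mono_fun' ((intInt_one_add hβ c).const_mul (max 1 (2^α)))
    (meas_f α β m).aestronglyMeasurable.restrict
  filter_upwards [ae_restrict_mem measurableSet_uIoc] with x hx
  rw [Set.uIoc_of_le (by linarith : (-1:ℝ) ≤ c)] at hx
  exact f_bound_left α β m hx.1.le (le_trans hx.2 hc1)

lemma tail_right (α β : ℝ) (hα : -1 < α) (m : ℤ) {c : ℝ} (hc : 0 ≤ c) (hc1 : c ≤ 1) :
    |∫ x in c..1, (1-x)^α * (1+x)^β * (T ℝ m).eval x|
      ≤ max 1 (2^β) / (α+1) * (1-c)^(α+1) := by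
  have hb : IntervalIntegrable (fun x => max 1 (2^β) * (1-x)^α) volume c 1 :=
    (intInt_one_sub hα c).const_mul _
  have h := intervalIntegral.norm_integral_le_abs_of_norm_le
    (f := fun x => (1-x)^α * (1+x)^β * (T ℝ m).eval x)
    (g := fun x => max 1 (2^β) * (1-x)^α) (μ := volume) (a := c) (b := 1) ?_ hb
  · rw [Real.norm_eq_abs] at h
    refine h.trans ?_
    rw [intervalIntegral.integral_const_mul, integral_one_sub_rpow (Or.inl hα),
      show (1:ℝ) - 1 = 0 by ring, Real.zero_rpow (by linarith : α+1 ≠ 0)]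
    rw [sub_zero, abs_of_nonneg (mul_nonneg (le_trans zero_le_one (le_max_left _ _))
      (div_nonneg (Real.rpow_nonneg (by linarith) _) (by linarith)))]
    exact le_of_eq (by ring)
  · filter_upwards [ae_restrict_mem measurableSet_uIoc] with x hx
    rw [Set.uIoc_of_le hc1] at hx
    exact f_bound_right α β m (le_trans hc hx.1.le) hx.2

lemma tail_left (α β : ℝ) (hβ : -1 < β) (m : ℤ) {c : ℝ} (hc : -1 ≤ c) (hc1 : c ≤ 0) :
    |∫ x in (-1:ℝ)..c, (1-x)^α * (1+x)^β * (T ℝ m).eval x|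
      ≤ max 1 (2^α) / (β+1) * (1+c)^(β+1) := by
  have hb : IntervalIntegrable (fun x => max 1 (2^α) * (1+x)^β) volume (-1) c :=
    (intInt_one_add hβ c).const_mul _
  have h := intervalIntegral.norm_integral_le_abs_of_norm_le
    (f := fun x => (1-x)^α * (1+x)^β * (T ℝ m).eval x)
    (g := fun x => max 1 (2^α) * (1+x)^β) (μ := volume) (a := -1) (b := c) ?_ hb
  · rw [Real.norm_eq_abs] at h
    refine h.trans ?_
    rw [intervalIntegral.integral_const_mul, integral_one_add_rpow (Or.inl hβ)]
    rw [show (1:ℝ) + -1 = 0 by ring, Real.zero_rpow (by linarith : β+1 ≠ 0)]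
    rw [sub_zero, abs_of_nonneg (mul_nonneg (le_trans zero_le_one (le_max_left _ _))
      (div_nonneg (Real.rpow_nonneg (by linarith) _) (by linarith)))]
    exact le_of_eq (by ring)
  · filter_upwards [ae_restrict_mem measurableSet_uIoc] with x hx
    rw [Set.uIoc_of_le (by linarith : (-1:ℝ) ≤ c)] at hx
    exact f_bound_left α β m hx.1.le (le_trans hx.2 hc1)

lemma heps_eq {m : ℕ} (hm : 0 < m) : (m:ℝ)^(-2:ℝ) = ((m:ℝ)^2)⁻¹ := by
  have hx : (0:ℝ) < m := by exact_mod_cast hm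
  rw [show ((-2):ℝ) = -((2:ℕ):ℝ) by norm_num, Real.rpow_neg hx.le, Real.rpow_natCast]

lemma heps_pow {m : ℕ} (hm : 0 < m) (p : ℝ) :
    ((m:ℝ)^(-2:ℝ))^p = (m:ℝ)^(-2*p) := by
  have hx : (0:ℝ) < m := by exact_mod_cast hm
  rw [← Real.rpow_mul hx.le]
  
lemma sqrt_le_32 {t : ℝ} (h : t ≤ 9/4) : Real.sqrt t ≤ 3/2 := by
  have := Real.sqrt_le_sqrt h
  rwa [show (9/4:ℝ) = (3/2)^2 by norm_num, Real.sqrt_sq (by norm_num : (0:ℝ) ≤ 3/2)] at this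

lemma abs_Sfun_le_eps {m : ℕ} (hm : 2 ≤ m) {x : ℝ} (h1 : -1 ≤ x) (h2 : x ≤ 1) :
    |Sfun m x| ≤ 2*(m:ℝ)^(-2:ℝ) + 3 * (m:ℝ)^(-1:ℝ) * Real.sqrt (1-x) := by
  have hm0 : 0 < m := by omega
  have hx : (0:ℝ) < m := by exact_mod_cast hm0
  refine (abs_Sfun_le hm h1 h2).trans ?_
  have e1 : 2/(m:ℝ)^2 = 2*(m:ℝ)^(-2:ℝ) := by
    rw [heps_eq hm0]; ring
  have e2 : 2 * Real.sqrt (1-x) * Real.sqrt (1+x) / m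
      ≤ 3 * (m:ℝ)^(-1:ℝ) * Real.sqrt (1-x) := by
    have h3 : Real.sqrt (1+x) ≤ 3/2 := sqrt_le_32 (by linarith)
    have h4 : (m:ℝ)^(-1:ℝ) = ((m:ℝ))⁻¹ := Real.rpow_neg_one _
    rw [h4, div_eq_mul_inv]
    have hs : (0:ℝ) ≤ Real.sqrt (1-x) := Real.sqrt_nonneg _
    have hinv : (0:ℝ) ≤ ((m:ℝ))⁻¹ := by positivity
    nlinarith [mul_nonneg hs hinv]
  linarith [e2, le_of_eq e1]

lemma bdry_right (α β : ℝ) {m : ℕ} (hm : 2 ≤ m) :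
    |wfun α β (1 - (m:ℝ)^(-2:ℝ)) * Sfun m (1 - (m:ℝ)^(-2:ℝ))|
      ≤ 5 * max 1 (2^β) * (m:ℝ)^(-2-2*min α β) := by
  have hm0 : 0 < m := by omega
  have hx : (0:ℝ) < m := by exact_mod_cast hm0
  have hm2 : (2:ℝ) ≤ m := by exact_mod_cast hm
  set ε := (m:ℝ)^(-2:ℝ) with hεdef
  have hε0 : 0 < ε := Real.rpow_pos_of_pos hx _
  have hε14 : ε ≤ 1/4 := by
    rw [hεdef, heps_eq hm0]
    rw [show (1/4:ℝ) = ((2:ℝ)^2)⁻¹ by norm_num]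
    apply inv_anti₀ (by norm_num)
    nlinarith
  set b := 1 - ε with hbdef
  set μ := min α β with hμdef
  have hwb : wfun α β b = ε^α * (1+b)^β := by
    rw [wfun, show (1:ℝ) - b = ε by rw [hbdef]; ring]
  have hw_nonneg : 0 ≤ wfun α β b := by
    rw [hwb]
    exact mul_nonneg (Real.rpow_nonneg hε0.le _) (Real.rpow_nonneg (by linarith) _)
  have hwble : wfun α β b ≤ ε^μ * max 1 (2^β) := by
    rw [hwb]
    have h1 : ε^α ≤ ε^μ :=
      Real.rpow_le_rpow_of_exponent_ge hε0 (by linarith) (min_le_left _ _)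
    have h2 : (1+b)^β ≤ max 1 (2^β) := rpow_le_max (by rw [hbdef]; linarith)
      (by rw [hbdef]; linarith)
    exact mul_le_mul h1 h2 (Real.rpow_nonneg (by rw [hbdef]; linarith) _)
      (Real.rpow_nonneg hε0.le _)
  have hS : |Sfun m b| ≤ 5 * ε := by
    have h := abs_Sfun_le_eps hm (x := b) (by rw [hbdef]; linarith) (by rw [hbdef]; linarith)
    have h1 : Real.sqrt (1-b) = ε^(1/2:ℝ) := by
      rw [show (1:ℝ) - b = ε by rw [hbdef]; ring]
      exact Real.sqrt_eq_rpow ε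
    have h2 : ε^(1/2:ℝ) = (m:ℝ)^(-1:ℝ) := by
      rw [hεdef, heps_pow hm0]; norm_num
    have h3 : (m:ℝ)^(-1:ℝ) * (m:ℝ)^(-1:ℝ) = ε := by
      rw [hεdef, ← Real.rpow_add hx]; norm_num
    calc |Sfun m b| ≤ 2*(m:ℝ)^(-2:ℝ) + 3*(m:ℝ)^(-1:ℝ) * Real.sqrt (1-b) := h
      _ = 2*ε + 3*((m:ℝ)^(-1:ℝ) * (m:ℝ)^(-1:ℝ)) := by rw [h1, h2, hεdef]; ring
      _ = 5*ε := by rw [h3]; ring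
  have hfin : |wfun α β b * Sfun m b| ≤ (ε^μ * max 1 (2^β)) * (5*ε) := by
    rw [abs_mul, abs_of_nonneg hw_nonneg]
    apply mul_le_mul hwble hS (abs_nonneg _)
    exact mul_nonneg (Real.rpow_nonneg hε0.le _)
      (le_trans zero_le_one (le_max_left _ _))
  have hkey : ε^μ * ε = (m:ℝ)^(-2-2*μ) := by
    rw [hεdef, heps_pow hm0 μ, ← Real.rpow_add hx,
      show (-2*μ + -2 : ℝ) = -2 - 2*μ by ring]
  calc |wfun α β b * Sfun m b| ≤ (ε^μ * max 1 (2^β)) * (5*ε) := hfin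
    _ = 5 * max 1 (2^β) * (ε^μ * ε) := by ring
    _ = 5 * max 1 (2^β) * (m:ℝ)^(-2-2*μ) := by rw [hkey]

lemma abs_Sfun_le_eps' {m : ℕ} (hm : 2 ≤ m) {x : ℝ} (h1 : -1 ≤ x) (h2 : x ≤ 1) :
    |Sfun m x| ≤ 2*(m:ℝ)^(-2:ℝ) + 3 * (m:ℝ)^(-1:ℝ) * Real.sqrt (1+x) := by
  have hm0 : 0 < m := by omega
  have hx : (0:ℝ) < m := by exact_mod_cast hm0
  refine (abs_Sfun_le hm h1 h2).trans ?_
  have e1 : 2/(m:ℝ)^2 = 2*(m:ℝ)^(-2:ℝ) := by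
    rw [heps_eq hm0]; ring
  have e2 : 2 * Real.sqrt (1-x) * Real.sqrt (1+x) / m
      ≤ 3 * (m:ℝ)^(-1:ℝ) * Real.sqrt (1+x) := by
    have h3 : Real.sqrt (1-x) ≤ 3/2 := sqrt_le_32 (by linarith)
    have h4 : (m:ℝ)^(-1:ℝ) = ((m:ℝ))⁻¹ := Real.rpow_neg_one _
    rw [h4, div_eq_mul_inv]
    have hs : (0:ℝ) ≤ Real.sqrt (1+x) := Real.sqrt_nonneg _
    have hinv : (0:ℝ) ≤ ((m:ℝ))⁻¹ := by positivity
    nlinarith [mul_nonneg hs hinv]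
  linarith [e2, le_of_eq e1]

lemma bdry_left (α β : ℝ) {m : ℕ} (hm : 2 ≤ m) :
    |wfun α β (-1 + (m:ℝ)^(-2:ℝ)) * Sfun m (-1 + (m:ℝ)^(-2:ℝ))|
      ≤ 5 * max 1 (2^α) * (m:ℝ)^(-2-2*min α β) := by
  have hm0 : 0 < m := by omega
  have hx : (0:ℝ) < m := by exact_mod_cast hm0
  have hm2 : (2:ℝ) ≤ m := by exact_mod_cast hm
  set ε := (m:ℝ)^(-2:ℝ) with hεdef
  have hε0 : 0 < ε := Real.rpow_pos_of_pos hx _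
  have hε14 : ε ≤ 1/4 := by
    rw [hεdef, heps_eq hm0, show (1/4:ℝ) = ((2:ℝ)^2)⁻¹ by norm_num]
    apply inv_anti₀ (by norm_num)
    nlinarith
  set a := -1 + ε with hadef
  set μ := min α β with hμdef
  have hwa : wfun α β a = (1-a)^α * ε^β := by
    rw [wfun, show (1:ℝ) + a = ε by rw [hadef]; ring]
  have hw_nonneg : 0 ≤ wfun α β a := by
    rw [hwa]
    exact mul_nonneg (Real.rpow_nonneg (by rw [hadef]; linarith) _)
      (Real.rpow_nonneg hε0.le _)
  have hwble : wfun α β a ≤ max 1 (2^α) * ε^μ := by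
    rw [hwa]
    have h1 : ε^β ≤ ε^μ :=
      Real.rpow_le_rpow_of_exponent_ge hε0 (by linarith) (min_le_right _ _)
    have h2 : (1-a)^α ≤ max 1 (2^α) := rpow_le_max (by rw [hadef]; linarith)
      (by rw [hadef]; linarith)
    exact mul_le_mul h2 h1 (Real.rpow_nonneg hε0.le _)
      (le_trans zero_le_one (le_max_left _ _))
  have hS : |Sfun m a| ≤ 5 * ε := by
    have h := abs_Sfun_le_eps' hm (x := a) (by rw [hadef]; linarith) (by rw [hadef]; linarith)
    have h1 : Real.sqrt (1+a) = ε^(1/2:ℝ) := by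
      rw [show (1:ℝ) + a = ε by rw [hadef]; ring]
      exact Real.sqrt_eq_rpow ε
    have h2 : ε^(1/2:ℝ) = (m:ℝ)^(-1:ℝ) := by
      rw [hεdef, heps_pow hm0]; norm_num
    have h3 : (m:ℝ)^(-1:ℝ) * (m:ℝ)^(-1:ℝ) = ε := by
      rw [hεdef, ← Real.rpow_add hx]; norm_num
    calc |Sfun m a| ≤ 2*(m:ℝ)^(-2:ℝ) + 3*(m:ℝ)^(-1:ℝ) * Real.sqrt (1+a) := h
      _ = 2*ε + 3*((m:ℝ)^(-1:ℝ) * (m:ℝ)^(-1:ℝ)) := by rw [h1, h2, hεdef]; ring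
      _ = 5*ε := by rw [h3]; ring
  have hfin : |wfun α β a * Sfun m a| ≤ (max 1 (2^α) * ε^μ) * (5*ε) := by
    rw [abs_mul, abs_of_nonneg hw_nonneg]
    apply mul_le_mul hwble hS (abs_nonneg _)
    exact mul_nonneg (le_trans zero_le_one (le_max_left _ _))
      (Real.rpow_nonneg hε0.le _)
  have hkey : ε^μ * ε = (m:ℝ)^(-2-2*μ) := by
    rw [hεdef, heps_pow hm0 μ, ← Real.rpow_add hx,
      show (-2*μ + -2 : ℝ) = -2 - 2*μ by ring]
  calc |wfun α β a * Sfun m a| ≤ (max 1 (2^α) * ε^μ) * (5*ε) := hfin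
    _ = 5 * max 1 (2^α) * (ε^μ * ε) := by ring
    _ = 5 * max 1 (2^α) * (m:ℝ)^(-2-2*μ) := by rw [hkey]

lemma meas_Sfun (m : ℕ) : Continuous (Sfun m) := by
  unfold Sfun
  exact ((T ℝ ((m:ℤ)+1)).continuous_aeval.div_const _).sub
    ((T ℝ ((m:ℤ)-1)).continuous_aeval.div_const _)

lemma meas_wfun' (α β : ℝ) : Measurable (wfun' α β) := by
  unfold wfun'
  exact ((((measurable_const.sub measurable_id).pow_const (α-1)).const_mul (-1*α)).mul
    ((measurable_const.add measurable_id).pow_const β)).add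
    (((measurable_const.sub measurable_id).pow_const α).mul
      (((measurable_const.add measurable_id).pow_const (β-1)).const_mul (1*β)))

lemma inner_right (α β : ℝ) (hmin : min α β < -(1/2)) {m : ℕ} (hm : 2 ≤ m) :
    |∫ x in (0:ℝ)..(1 - (m:ℝ)^(-2:ℝ)), wfun' α β x * Sfun m x|
      ≤ (2 * (2^(α-min α β) * (|α| * max 1 (2^β) + |β| * max 1 (2^(β-1)))) / (-min α β)
        + 3 * (2^(α-min α β) * (|α| * max 1 (2^β) + |β| * max 1 (2^(β-1))))
          / (-(min α β + 1/2))) * (m:ℝ)^(-2-2*min α β) := by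
  have hm0 : 0 < m := by omega
  have hx : (0:ℝ) < m := by exact_mod_cast hm0
  have hm2 : (2:ℝ) ≤ m := by exact_mod_cast hm
  set μ := min α β with hμdef
  set C1 := 2^(α-μ) * (|α| * max 1 (2^β) + |β| * max 1 (2^(β-1))) with hC1def
  have hC1 : 0 ≤ C1 := by
    rw [hC1def]
    have : (0:ℝ) ≤ 2^(α-μ) := Real.rpow_nonneg (by norm_num) _
    have h1 : (0:ℝ) ≤ |α| * max 1 (2^β) :=
      mul_nonneg (abs_nonneg _) (le_trans zero_le_one (le_max_left _ _))
    have h2 : (0:ℝ) ≤ |β| * max 1 (2^(β-1)) :=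
      mul_nonneg (abs_nonneg _) (le_trans zero_le_one (le_max_left _ _))
    positivity
  set ε := (m:ℝ)^(-2:ℝ) with hεdef
  have hε0 : 0 < ε := Real.rpow_pos_of_pos hx _
  have hε14 : ε ≤ 1/4 := by
    rw [hεdef, heps_eq hm0, show (1/4:ℝ) = ((2:ℝ)^2)⁻¹ by norm_num]
    apply inv_anti₀ (by norm_num)
    nlinarith
  set mi := (m:ℝ)^(-1:ℝ) with hmidef
  have hmi0 : 0 ≤ mi := (Real.rpow_pos_of_pos hx _).le
  set b := 1 - ε with hbdef
  have hb1 : b < 1 := by rw [hbdef]; linarith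
  have hb34 : (3/4:ℝ) ≤ b := by rw [hbdef]; linarith
  have hμ0 : μ < 0 := by linarith
  have hμ12 : μ + 1/2 < 0 := by linarith
  -- dominating function
  set g := fun x : ℝ => 2*C1*ε*(1-x)^(μ-1) + 3*C1*mi*(1-x)^(μ-1/2) with hgdef
  have hgint : IntervalIntegrable g volume 0 b :=
    (((intInt_one_sub' (μ-1) (by norm_num) hb1).const_mul (2*C1*ε)).add
      ((intInt_one_sub' (μ-1/2) (by norm_num) hb1).const_mul (3*C1*mi)))
  have hbd : ∀ᵐ t ∂(volume.restrict (Set.uIoc (0:ℝ) b)),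
      ‖wfun' α β t * Sfun m t‖ ≤ g t := by
    filter_upwards [ae_restrict_mem measurableSet_uIoc] with t ht
    rw [Set.uIoc_of_le (by linarith : (0:ℝ) ≤ b)] at ht
    have ht0 : 0 ≤ t := ht.1.le
    have ht1 : t < 1 := lt_of_le_of_lt ht.2 hb1
    have h1t : 0 < 1 - t := by linarith
    have hw := wfun'_bound_right α β ht0 ht1
    have hS := abs_Sfun_le_eps hm (x := t) (by linarith) (by linarith)
    rw [Real.norm_eq_abs, abs_mul]
    have hsq : Real.sqrt (1-t) = (1-t)^(1/2:ℝ) := Real.sqrt_eq_rpow _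
    calc |wfun' α β t| * |Sfun m t|
        ≤ (C1 * (1-t)^(μ-1)) * (2*ε + 3*mi*(1-t)^(1/2:ℝ)) := by
          apply mul_le_mul hw _ (abs_nonneg _)
            (mul_nonneg hC1 (Real.rpow_nonneg h1t.le _))
          rw [← hsq]
          calc |Sfun m t| ≤ 2*(m:ℝ)^(-2:ℝ) + 3*(m:ℝ)^(-1:ℝ)*Real.sqrt (1-t) := hS
            _ = 2*ε + 3*mi*Real.sqrt (1-t) := by rw [hεdef, hmidef]
      _ = g t := by
          rw [hgdef]
          have : (1-t)^(μ-1) * (1-t)^(1/2:ℝ) = (1-t)^(μ-1/2) := by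
            rw [← Real.rpow_add h1t, show μ-1+1/2 = μ-1/2 by ring]
          simp only []
          rw [show (C1 * (1-t)^(μ-1)) * (2*ε + 3*mi*(1-t)^(1/2:ℝ))
            = 2*C1*ε*(1-t)^(μ-1) + 3*C1*mi*((1-t)^(μ-1)*(1-t)^(1/2:ℝ)) by ring, this]
  have hle := intervalIntegral.norm_integral_le_abs_of_norm_le hbd hgint
  rw [Real.norm_eq_abs] at hle
  refine hle.trans ?_
  -- compute ∫ g
  have hI1 : ∫ x in (0:ℝ)..b, (1-x)^(μ-1) = (1 - ε^μ)/μ := by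
    rw [integral_one_sub_rpow (Or.inr ⟨by intro h; rw [sub_eq_iff_eq_add] at h; norm_num at h; linarith, by norm_num, hb1⟩)]
    rw [show μ-1+1 = μ by ring, sub_zero, Real.one_rpow,
      show (1:ℝ) - b = ε by rw [hbdef]; ring]
  have hI2 : ∫ x in (0:ℝ)..b, (1-x)^(μ-1/2) = (1 - ε^(μ+1/2))/(μ+1/2) := by
    rw [integral_one_sub_rpow (Or.inr ⟨by intro h; rw [sub_eq_iff_eq_add] at h; norm_num at h; linarith, by norm_num, hb1⟩)]
    rw [show μ-1/2+1 = μ+1/2 by ring, sub_zero, Real.one_rpow,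
      show (1:ℝ) - b = ε by rw [hbdef]; ring]
  have hgval : ∫ x in (0:ℝ)..b, g x
      = 2*C1*ε*((1 - ε^μ)/μ) + 3*C1*mi*((1 - ε^(μ+1/2))/(μ+1/2)) := by
    rw [hgdef]
    rw [intervalIntegral.integral_add
      ((intInt_one_sub' (μ-1) (by norm_num) hb1).const_mul (2*C1*ε))
      ((intInt_one_sub' (μ-1/2) (by norm_num) hb1).const_mul (3*C1*mi)),
      intervalIntegral.integral_const_mul, intervalIntegral.integral_const_mul,
      hI1, hI2]
  -- positivity and final bound
  have hεμ1 : 1 ≤ ε^μ := by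
    have := Real.rpow_le_rpow_of_exponent_ge hε0 (by linarith : ε ≤ 1) hμ0.le
    rwa [Real.rpow_zero] at this
  have hεμ2 : 1 ≤ ε^(μ+1/2) := by
    have := Real.rpow_le_rpow_of_exponent_ge hε0 (by linarith : ε ≤ 1) hμ12.le
    rwa [Real.rpow_zero] at this
  have hT1 : 0 ≤ (1 - ε^μ)/μ := by
    rw [show (1 - ε^μ)/μ = (ε^μ - 1)/(-μ) by ring]
    exact div_nonneg (by linarith) (by linarith)
  have hT2 : 0 ≤ (1 - ε^(μ+1/2))/(μ+1/2) := by
    rw [show (1 - ε^(μ+1/2))/(μ+1/2) = (ε^(μ+1/2) - 1)/(-(μ+1/2)) by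
      rw [div_neg, ← neg_div, neg_sub]]
    exact div_nonneg (by linarith) (by linarith)
  have hB1 : (1 - ε^μ)/μ ≤ ε^μ/(-μ) := by
    rw [show (1 - ε^μ)/μ = (ε^μ - 1)/(-μ) by ring]
    gcongr
    · linarith
    · linarith
  have hB2 : (1 - ε^(μ+1/2))/(μ+1/2) ≤ ε^(μ+1/2)/(-(μ+1/2)) := by
    rw [show (1 - ε^(μ+1/2))/(μ+1/2) = (ε^(μ+1/2) - 1)/(-(μ+1/2)) by
      rw [div_neg, ← neg_div, neg_sub]]
    gcongr
    · linarith
    · linarith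
  have habs : |∫ x in (0:ℝ)..b, g x| = ∫ x in (0:ℝ)..b, g x := by
    rw [abs_of_nonneg]
    rw [hgval]
    exact add_nonneg
      (mul_nonneg (mul_nonneg (mul_nonneg (by norm_num : (0:ℝ) ≤ 2) hC1) hε0.le) hT1)
      (mul_nonneg (mul_nonneg (mul_nonneg (by norm_num : (0:ℝ) ≤ 3) hC1) hmi0) hT2)
  have hkey1 : ε * ε^μ = (m:ℝ)^(-2-2*μ) := by
    rw [hεdef, heps_pow hm0 μ, ← Real.rpow_add hx,
      show (-2 + -2*μ : ℝ) = -2-2*μ by ring]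
  have hkey2 : mi * ε^(μ+1/2) = (m:ℝ)^(-2-2*μ) := by
    rw [hεdef, hmidef, heps_pow hm0, ← Real.rpow_add hx,
      show (-1 + -2*(μ+1/2) : ℝ) = -2-2*μ by ring]
  rw [habs, hgval]
  calc 2*C1*ε*((1-ε^μ)/μ) + 3*C1*mi*((1-ε^(μ+1/2))/(μ+1/2))
      ≤ 2*C1*ε*(ε^μ/(-μ)) + 3*C1*mi*(ε^(μ+1/2)/(-(μ+1/2))) := by
        apply add_le_add
        · exact mul_le_mul_of_nonneg_left hB1
            (mul_nonneg (mul_nonneg (by norm_num) hC1) hε0.le)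
        · exact mul_le_mul_of_nonneg_left hB2
            (mul_nonneg (mul_nonneg (by norm_num) hC1) hmi0)
    _ = 2*C1/(-μ)*(ε*ε^μ) + 3*C1/(-(μ+1/2))*(mi*ε^(μ+1/2)) := by ring
    _ = (2*C1/(-μ) + 3*C1/(-(μ+1/2))) * (m:ℝ)^(-2-2*μ) := by rw [hkey1, hkey2]; ring

lemma inner_left (α β : ℝ) (hmin : min α β < -(1/2)) {m : ℕ} (hm : 2 ≤ m) :
    |∫ x in (-1 + (m:ℝ)^(-2:ℝ))..(0:ℝ), wfun' α β x * Sfun m x|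
      ≤ (2 * (2^(β-min α β) * (|α| * max 1 (2^(α-1)) + |β| * max 1 (2^α))) / (-min α β)
        + 3 * (2^(β-min α β) * (|α| * max 1 (2^(α-1)) + |β| * max 1 (2^α)))
          / (-(min α β + 1/2))) * (m:ℝ)^(-2-2*min α β) := by
  have hm0 : 0 < m := by omega
  have hx : (0:ℝ) < m := by exact_mod_cast hm0
  have hm2 : (2:ℝ) ≤ m := by exact_mod_cast hm
  set μ := min α β with hμdef
  set C2 := 2^(β-μ) * (|α| * max 1 (2^(α-1)) + |β| * max 1 (2^α)) with hC2def
  have hC2 : 0 ≤ C2 := by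
    rw [hC2def]
    have : (0:ℝ) ≤ 2^(β-μ) := Real.rpow_nonneg (by norm_num) _
    have h1 : (0:ℝ) ≤ |α| * max 1 (2^(α-1)) :=
      mul_nonneg (abs_nonneg _) (le_trans zero_le_one (le_max_left _ _))
    have h2 : (0:ℝ) ≤ |β| * max 1 (2^α) :=
      mul_nonneg (abs_nonneg _) (le_trans zero_le_one (le_max_left _ _))
    positivity
  set ε := (m:ℝ)^(-2:ℝ) with hεdef
  have hε0 : 0 < ε := Real.rpow_pos_of_pos hx _
  have hε14 : ε ≤ 1/4 := by
    rw [hεdef, heps_eq hm0, show (1/4:ℝ) = ((2:ℝ)^2)⁻¹ by norm_num]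
    apply inv_anti₀ (by norm_num)
    nlinarith
  set mi := (m:ℝ)^(-1:ℝ) with hmidef
  have hmi0 : 0 ≤ mi := (Real.rpow_pos_of_pos hx _).le
  set a := -1 + ε with hadef
  have ha1 : -1 < a := by rw [hadef]; linarith
  have ha34 : a ≤ -(3/4:ℝ) := by rw [hadef]; linarith
  have hμ0 : μ < 0 := by linarith
  have hμ12 : μ + 1/2 < 0 := by linarith
  set g := fun x : ℝ => 2*C2*ε*(1+x)^(μ-1) + 3*C2*mi*(1+x)^(μ-1/2) with hgdef
  have hgint : IntervalIntegrable g volume a 0 :=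
    (((intInt_one_add' (μ-1) ha1 (by norm_num)).const_mul (2*C2*ε)).add
      ((intInt_one_add' (μ-1/2) ha1 (by norm_num)).const_mul (3*C2*mi)))
  have hbd : ∀ᵐ t ∂(volume.restrict (Set.uIoc a (0:ℝ))),
      ‖wfun' α β t * Sfun m t‖ ≤ g t := by
    filter_upwards [ae_restrict_mem measurableSet_uIoc] with t ht
    rw [Set.uIoc_of_le (by linarith : a ≤ (0:ℝ))] at ht
    have ht0 : -1 < t := lt_trans ha1 ht.1
    have ht1 : t ≤ 0 := ht.2
    have h1t : 0 < 1 + t := by linarith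
    have hw := wfun'_bound_left α β ht0 ht1
    have hS := abs_Sfun_le_eps' hm (x := t) (by linarith) (by linarith)
    rw [Real.norm_eq_abs, abs_mul]
    have hsq : Real.sqrt (1+t) = (1+t)^(1/2:ℝ) := Real.sqrt_eq_rpow _
    calc |wfun' α β t| * |Sfun m t|
        ≤ (C2 * (1+t)^(μ-1)) * (2*ε + 3*mi*(1+t)^(1/2:ℝ)) := by
          apply mul_le_mul hw _ (abs_nonneg _)
            (mul_nonneg hC2 (Real.rpow_nonneg h1t.le _))
          rw [← hsq]
          calc |Sfun m t| ≤ 2*(m:ℝ)^(-2:ℝ) + 3*(m:ℝ)^(-1:ℝ)*Real.sqrt (1+t) := hS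
            _ = 2*ε + 3*mi*Real.sqrt (1+t) := by rw [hεdef, hmidef]
      _ = g t := by
          rw [hgdef]
          have : (1+t)^(μ-1) * (1+t)^(1/2:ℝ) = (1+t)^(μ-1/2) := by
            rw [← Real.rpow_add h1t, show μ-1+1/2 = μ-1/2 by ring]
          simp only []
          rw [show (C2 * (1+t)^(μ-1)) * (2*ε + 3*mi*(1+t)^(1/2:ℝ))
            = 2*C2*ε*(1+t)^(μ-1) + 3*C2*mi*((1+t)^(μ-1)*(1+t)^(1/2:ℝ)) by ring, this]
  have hle := intervalIntegral.norm_integral_le_abs_of_norm_le hbd hgint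
  rw [Real.norm_eq_abs] at hle
  refine hle.trans ?_
  have hI1 : ∫ x in a..(0:ℝ), (1+x)^(μ-1) = (1 - ε^μ)/μ := by
    rw [integral_one_add_rpow (Or.inr ⟨by intro h; rw [sub_eq_iff_eq_add] at h; norm_num at h; linarith, ha1, by norm_num⟩)]
    rw [show μ-1+1 = μ by ring, add_zero, Real.one_rpow,
      show (1:ℝ) + a = ε by rw [hadef]; ring]
  have hI2 : ∫ x in a..(0:ℝ), (1+x)^(μ-1/2) = (1 - ε^(μ+1/2))/(μ+1/2) := by
    rw [integral_one_add_rpow (Or.inr ⟨by intro h; rw [sub_eq_iff_eq_add] at h; norm_num at h; linarith, ha1, by norm_num⟩)]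
    rw [show μ-1/2+1 = μ+1/2 by ring, add_zero, Real.one_rpow,
      show (1:ℝ) + a = ε by rw [hadef]; ring]
  have hgval : ∫ x in a..(0:ℝ), g x
      = 2*C2*ε*((1 - ε^μ)/μ) + 3*C2*mi*((1 - ε^(μ+1/2))/(μ+1/2)) := by
    rw [hgdef]
    rw [intervalIntegral.integral_add
      ((intInt_one_add' (μ-1) ha1 (by norm_num)).const_mul (2*C2*ε))
      ((intInt_one_add' (μ-1/2) ha1 (by norm_num)).const_mul (3*C2*mi)),
      intervalIntegral.integral_const_mul, intervalIntegral.integral_const_mul,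
      hI1, hI2]
  have hεμ1 : 1 ≤ ε^μ := by
    have := Real.rpow_le_rpow_of_exponent_ge hε0 (by linarith : ε ≤ 1) hμ0.le
    rwa [Real.rpow_zero] at this
  have hεμ2 : 1 ≤ ε^(μ+1/2) := by
    have := Real.rpow_le_rpow_of_exponent_ge hε0 (by linarith : ε ≤ 1) hμ12.le
    rwa [Real.rpow_zero] at this
  have hT1 : 0 ≤ (1 - ε^μ)/μ := by
    rw [show (1 - ε^μ)/μ = (ε^μ - 1)/(-μ) by ring]
    exact div_nonneg (by linarith) (by linarith)
  have hT2 : 0 ≤ (1 - ε^(μ+1/2))/(μ+1/2) := by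
    rw [show (1 - ε^(μ+1/2))/(μ+1/2) = (ε^(μ+1/2) - 1)/(-(μ+1/2)) by
      rw [div_neg, ← neg_div, neg_sub]]
    exact div_nonneg (by linarith) (by linarith)
  have hB1 : (1 - ε^μ)/μ ≤ ε^μ/(-μ) := by
    rw [show (1 - ε^μ)/μ = (ε^μ - 1)/(-μ) by ring]
    gcongr
    · linarith
    · linarith
  have hB2 : (1 - ε^(μ+1/2))/(μ+1/2) ≤ ε^(μ+1/2)/(-(μ+1/2)) := by
    rw [show (1 - ε^(μ+1/2))/(μ+1/2) = (ε^(μ+1/2) - 1)/(-(μ+1/2)) by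
      rw [div_neg, ← neg_div, neg_sub]]
    gcongr
    · linarith
    · linarith
  have habs : |∫ x in a..(0:ℝ), g x| = ∫ x in a..(0:ℝ), g x := by
    rw [abs_of_nonneg]
    rw [hgval]
    exact add_nonneg
      (mul_nonneg (mul_nonneg (mul_nonneg (by norm_num : (0:ℝ) ≤ 2) hC2) hε0.le) hT1)
      (mul_nonneg (mul_nonneg (mul_nonneg (by norm_num : (0:ℝ) ≤ 3) hC2) hmi0) hT2)
  have hkey1 : ε * ε^μ = (m:ℝ)^(-2-2*μ) := by
    rw [hεdef, heps_pow hm0 μ, ← Real.rpow_add hx,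
      show (-2 + -2*μ : ℝ) = -2-2*μ by ring]
  have hkey2 : mi * ε^(μ+1/2) = (m:ℝ)^(-2-2*μ) := by
    rw [hεdef, hmidef, heps_pow hm0, ← Real.rpow_add hx,
      show (-1 + -2*(μ+1/2) : ℝ) = -2-2*μ by ring]
  rw [habs, hgval]
  calc 2*C2*ε*((1-ε^μ)/μ) + 3*C2*mi*((1-ε^(μ+1/2))/(μ+1/2))
      ≤ 2*C2*ε*(ε^μ/(-μ)) + 3*C2*mi*(ε^(μ+1/2)/(-(μ+1/2))) := by
        apply add_le_add
        · exact mul_le_mul_of_nonneg_left hB1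
            (mul_nonneg (mul_nonneg (by norm_num) hC2) hε0.le)
        · exact mul_le_mul_of_nonneg_left hB2
            (mul_nonneg (mul_nonneg (by norm_num) hC2) hmi0)
    _ = 2*C2/(-μ)*(ε*ε^μ) + 3*C2/(-(μ+1/2))*(mi*ε^(μ+1/2)) := by ring
    _ = (2*C2/(-μ) + 3*C2/(-(μ+1/2))) * (m:ℝ)^(-2-2*μ) := by rw [hkey1, hkey2]; ring
lemma contOn_one_sub (p : ℝ) {s : Set ℝ} (hs : ∀ x ∈ s, x < 1) :
    ContinuousOn (fun x : ℝ => (1-x)^p) s := by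
  apply ContinuousOn.rpow_const ((continuous_const.sub continuous_id).continuousOn)
  intro x hx
  exact Or.inl (ne_of_gt (by have := hs x hx; show (0:ℝ) < 1 - x; linarith))

lemma contOn_one_add (p : ℝ) {s : Set ℝ} (hs : ∀ x ∈ s, -1 < x) :
    ContinuousOn (fun x : ℝ => (1+x)^p) s := by
  apply ContinuousOn.rpow_const ((continuous_const.add continuous_id).continuousOn)
  intro x hx
  exact Or.inl (ne_of_gt (by have := hs x hx; show (0:ℝ) < 1 + x; linarith))

lemma contOn_wfun' (α β : ℝ) {s : Set ℝ} (hs : ∀ x ∈ s, -1 < x ∧ x < 1) :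
    ContinuousOn (wfun' α β) s := by
  unfold wfun'
  exact ((continuousOn_const.mul (contOn_one_sub (α-1) (fun x hx => (hs x hx).2))).mul
    (contOn_one_add β (fun x hx => (hs x hx).1))).add
    ((contOn_one_sub α (fun x hx => (hs x hx).2)).mul
      (continuousOn_const.mul (contOn_one_add (β-1) (fun x hx => (hs x hx).1))))

lemma contOn_f (α β : ℝ) (n : ℤ) {s : Set ℝ} (hs : ∀ x ∈ s, -1 < x ∧ x < 1) :
    ContinuousOn (fun x : ℝ => (1-x)^α * (1+x)^β * (T ℝ n).eval x) s :=
  ((contOn_one_sub α (fun x hx => (hs x hx).2)).mul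
    (contOn_one_add β (fun x hx => (hs x hx).1))).mul
    (T ℝ n).continuous_aeval.continuousOn

lemma mid_bound (α β : ℝ) (hmin : min α β < -(1/2)) {m : ℕ} (hm : 2 ≤ m) :
    |∫ x in (-1 + (m:ℝ)^(-2:ℝ))..(1 - (m:ℝ)^(-2:ℝ)),
        (1-x)^α * (1+x)^β * (T ℝ (m:ℤ)).eval x|
      ≤ (5 * max 1 (2^β) + 5 * max 1 (2^α)
        + (2 * (2^(α-min α β) * (|α| * max 1 (2^β) + |β| * max 1 (2^(β-1)))) / (-min α β)
          + 3 * (2^(α-min α β) * (|α| * max 1 (2^β) + |β| * max 1 (2^(β-1))))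
            / (-(min α β + 1/2)))
        + (2 * (2^(β-min α β) * (|α| * max 1 (2^(α-1)) + |β| * max 1 (2^α))) / (-min α β)
          + 3 * (2^(β-min α β) * (|α| * max 1 (2^(α-1)) + |β| * max 1 (2^α)))
            / (-(min α β + 1/2))))
        * (m:ℝ)^(-2-2*min α β) := by
  have hm0 : 0 < m := by omega
  have hx : (0:ℝ) < m := by exact_mod_cast hm0
  have hm2 : (2:ℝ) ≤ m := by exact_mod_cast hm
  set ε := (m:ℝ)^(-2:ℝ) with hεdef
  have hε0 : 0 < ε := Real.rpow_pos_of_pos hx _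
  have hε14 : ε ≤ 1/4 := by
    rw [hεdef, heps_eq hm0, show (1/4:ℝ) = ((2:ℝ)^2)⁻¹ by norm_num]
    apply inv_anti₀ (by norm_num)
    nlinarith
  set a := -1 + ε with hadef
  set b := 1 - ε with hbdef
  have hab : a ≤ b := by rw [hadef, hbdef]; linarith
  have ha0 : a ≤ 0 := by rw [hadef]; linarith
  have hb0 : (0:ℝ) ≤ b := by rw [hbdef]; linarith
  have hdab : ∀ x ∈ Set.uIcc a b, -1 < x ∧ x < 1 := by
    intro x hx'
    rw [Set.uIcc_of_le hab] at hx'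
    constructor
    · have := hx'.1; rw [hadef] at this; linarith
    · have := hx'.2; rw [hbdef] at this; linarith
  have hda0 : ∀ x ∈ Set.uIcc a (0:ℝ), -1 < x ∧ x < 1 := by
    intro x hx'
    rw [Set.uIcc_of_le ha0] at hx'
    constructor
    · have := hx'.1; rw [hadef] at this; linarith
    · have := hx'.2; linarith
  have hd0b : ∀ x ∈ Set.uIcc (0:ℝ) b, -1 < x ∧ x < 1 := by
    intro x hx'
    rw [Set.uIcc_of_le hb0] at hx'
    constructor
    · have := hx'.1; linarith
    · have := hx'.2; rw [hbdef] at this; linarith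
  have hIBP := intervalIntegral.integral_mul_deriv_eq_deriv_mul
    (a := a) (b := b) (u := wfun α β) (v := Sfun m) (u' := wfun' α β)
    (v' := fun x => (T ℝ (m:ℤ)).eval x)
    (fun x hx' => hasDerivAt_wfun α β (hdab x hx').1 (hdab x hx').2)
    (fun x hx' => hasDerivAt_Sfun hm (hdab x hx').1 (hdab x hx').2)
    ((contOn_wfun' α β hdab).intervalIntegrable)
    ((T ℝ (m:ℤ)).continuous_aeval.intervalIntegrable _ _)
  have hint1 : IntervalIntegrable (fun x => wfun' α β x * Sfun m x) volume a 0 :=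
    ((contOn_wfun' α β hda0).mul (meas_Sfun m).continuousOn).intervalIntegrable
  have hint2 : IntervalIntegrable (fun x => wfun' α β x * Sfun m x) volume 0 b :=
    ((contOn_wfun' α β hd0b).mul (meas_Sfun m).continuousOn).intervalIntegrable
  have hspl := intervalIntegral.integral_add_adjacent_intervals hint1 hint2
  have hEq : (∫ x in a..b, (1-x)^α * (1+x)^β * (T ℝ (m:ℤ)).eval x)
      = ∫ x in a..b, wfun α β x * (T ℝ (m:ℤ)).eval x := rfl
  rw [hEq, hIBP, ← hspl]
  have h1 := bdry_right α β hm
  have h2 := bdry_left α β hm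
  have h3 := inner_right α β hmin hm
  have h4 := inner_left α β hmin hm
  rw [← hbdef] at h1
  rw [← hadef] at h2 h4
  rw [← hbdef] at h3
  calc |wfun α β b * Sfun m b - wfun α β a * Sfun m a
        - ((∫ x in a..(0:ℝ), wfun' α β x * Sfun m x)
          + ∫ x in (0:ℝ)..b, wfun' α β x * Sfun m x)|
      ≤ |wfun α β b * Sfun m b - wfun α β a * Sfun m a|
        + |(∫ x in a..(0:ℝ), wfun' α β x * Sfun m x)
          + ∫ x in (0:ℝ)..b, wfun' α β x * Sfun m x| := abs_sub _ _
    _ ≤ (|wfun α β b * Sfun m b| + |wfun α β a * Sfun m a|)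
        + (|∫ x in a..(0:ℝ), wfun' α β x * Sfun m x|
          + |∫ x in (0:ℝ)..b, wfun' α β x * Sfun m x|) :=
        add_le_add (abs_sub _ _) (abs_add_le _ _)
    _ ≤ (5 * max 1 (2^β) * (m:ℝ)^(-2-2*min α β)
          + 5 * max 1 (2^α) * (m:ℝ)^(-2-2*min α β))
        + ((2 * (2^(β-min α β) * (|α| * max 1 (2^(α-1)) + |β| * max 1 (2^α)))
              / (-min α β)
            + 3 * (2^(β-min α β) * (|α| * max 1 (2^(α-1)) + |β| * max 1 (2^α)))
              / (-(min α β + 1/2))) * (m:ℝ)^(-2-2*min α β)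
          + (2 * (2^(α-min α β) * (|α| * max 1 (2^β) + |β| * max 1 (2^(β-1))))
              / (-min α β)
            + 3 * (2^(α-min α β) * (|α| * max 1 (2^β) + |β| * max 1 (2^(β-1))))
              / (-(min α β + 1/2))) * (m:ℝ)^(-2-2*min α β)) := by
        exact add_le_add (add_le_add h1 h2) (add_le_add h4 h3)
    _ = _ := by ring
/-- The modified moment `M_m(α,β) = ∫_{-1}^1 (1-x)^α (1+x)^β T_m(x) dx`. -/
noncomputable def modMoment (α β : ℝ) (m : ℕ) : ℝ :=
  ∫ x in (-1:ℝ)..1, (1 - x) ^ α * (1 + x) ^ β * (Polynomial.Chebyshev.T ℝ m).eval x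

lemma ge_two_bound (α β : ℝ) (hα : -1 < α) (hβ : -1 < β) (hmin : min α β < -(1/2)) :
    ∃ C : ℝ, 0 ≤ C ∧ ∀ m : ℕ, 2 ≤ m →
      |modMoment α β m| ≤ C * (m:ℝ)^(-2-2*min α β) := by
  have hμα : min α β ≤ α := min_le_left _ _
  have hμβ : min α β ≤ β := min_le_right _ _
  have hμ0 : min α β < 0 := by linarith
  have hμ12 : min α β + 1/2 < 0 := by linarith
  have hKα : (0:ℝ) ≤ max 1 (2^α) := le_trans zero_le_one (le_max_left _ _)
  have hKβ : (0:ℝ) ≤ max 1 (2^β) := le_trans zero_le_one (le_max_left _ _)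
  have hC1 : (0:ℝ) ≤ 2^(α-min α β) * (|α| * max 1 (2^β) + |β| * max 1 (2^(β-1))) :=
    mul_nonneg (Real.rpow_nonneg (by norm_num) _)
      (add_nonneg (mul_nonneg (abs_nonneg _) hKβ)
        (mul_nonneg (abs_nonneg _) (le_trans zero_le_one (le_max_left _ _))))
  have hC2 : (0:ℝ) ≤ 2^(β-min α β) * (|α| * max 1 (2^(α-1)) + |β| * max 1 (2^α)) :=
    mul_nonneg (Real.rpow_nonneg (by norm_num) _)
      (add_nonneg (mul_nonneg (abs_nonneg _) (le_trans zero_le_one (le_max_left _ _)))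
        (mul_nonneg (abs_nonneg _) hKα))
  refine ⟨max 1 (2^α)/(β+1) + max 1 (2^β)/(α+1)
    + (5 * max 1 (2^β) + 5 * max 1 (2^α)
      + (2 * (2^(α-min α β) * (|α| * max 1 (2^β) + |β| * max 1 (2^(β-1)))) / (-min α β)
        + 3 * (2^(α-min α β) * (|α| * max 1 (2^β) + |β| * max 1 (2^(β-1))))
          / (-(min α β + 1/2)))
      + (2 * (2^(β-min α β) * (|α| * max 1 (2^(α-1)) + |β| * max 1 (2^α))) / (-min α β)
        + 3 * (2^(β-min α β) * (|α| * max 1 (2^(α-1)) + |β| * max 1 (2^α)))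
          / (-(min α β + 1/2)))), ?_, ?_⟩
  · have h1 : (0:ℝ) ≤ max 1 (2^α)/(β+1) := div_nonneg hKα (by linarith)
    have h2 : (0:ℝ) ≤ max 1 (2^β)/(α+1) := div_nonneg hKβ (by linarith)
    have h3 : (0:ℝ) ≤ 2 * _ / (-min α β) :=
      div_nonneg (mul_nonneg (by norm_num) hC1) (by linarith)
    have h4 : (0:ℝ) ≤ 3 * _ / (-(min α β + 1/2)) :=
      div_nonneg (mul_nonneg (by norm_num) hC1) (by linarith)
    have h5 : (0:ℝ) ≤ 2 * _ / (-min α β) :=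
      div_nonneg (mul_nonneg (by norm_num) hC2) (by linarith)
    have h6 : (0:ℝ) ≤ 3 * _ / (-(min α β + 1/2)) :=
      div_nonneg (mul_nonneg (by norm_num) hC2) (by linarith)
    have h7 : (0:ℝ) ≤ 5 * max 1 (2^β) := by linarith
    have h8 : (0:ℝ) ≤ 5 * max 1 (2^α) := by linarith
    linarith
  intro m hm
  have hm0 : 0 < m := by omega
  have hx : (0:ℝ) < m := by exact_mod_cast hm0
  have hx1 : (1:ℝ) ≤ m := by exact_mod_cast (by omega : 1 ≤ m)
  have hm2 : (2:ℝ) ≤ m := by exact_mod_cast hm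
  set ε := (m:ℝ)^(-2:ℝ) with hεdef
  have hε0 : 0 < ε := Real.rpow_pos_of_pos hx _
  have hε14 : ε ≤ 1/4 := by
    rw [hεdef, heps_eq hm0, show (1/4:ℝ) = ((2:ℝ)^2)⁻¹ by norm_num]
    apply inv_anti₀ (by norm_num)
    nlinarith
  set a := -1 + ε with hadef
  set b := 1 - ε with hbdef
  have ha1 : (-1:ℝ) ≤ a := by rw [hadef]; linarith
  have ha0 : a ≤ 0 := by rw [hadef]; linarith
  have hb0 : (0:ℝ) ≤ b := by rw [hbdef]; linarith
  have hb1 : b ≤ 1 := by rw [hbdef]; linarith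
  have hdab : ∀ x ∈ Set.uIcc a b, -1 < x ∧ x < 1 := by
    intro x hx'
    rw [Set.uIcc_of_le (by rw [hadef, hbdef]; linarith : a ≤ b)] at hx'
    constructor
    · have := hx'.1; rw [hadef] at this; linarith
    · have := hx'.2; rw [hbdef] at this; linarith
  have hL : IntervalIntegrable
      (fun x => (1-x)^α * (1+x)^β * (T ℝ (m:ℤ)).eval x) volume (-1) a :=
    intInt_f_left α β hβ (m:ℤ) ha1 ha0
  have hM : IntervalIntegrable
      (fun x => (1-x)^α * (1+x)^β * (T ℝ (m:ℤ)).eval x) volume a b :=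
    (contOn_f α β (m:ℤ) hdab).intervalIntegrable
  have hR : IntervalIntegrable
      (fun x => (1-x)^α * (1+x)^β * (T ℝ (m:ℤ)).eval x) volume b 1 :=
    intInt_f_right α β hα (m:ℤ) hb0 hb1
  have e1 := intervalIntegral.integral_add_adjacent_intervals hM hR
  have e2 := intervalIntegral.integral_add_adjacent_intervals hL (hM.trans hR)
  have hsplit : modMoment α β m
      = (∫ x in (-1:ℝ)..a, (1-x)^α * (1+x)^β * (T ℝ (m:ℤ)).eval x)
        + ((∫ x in a..b, (1-x)^α * (1+x)^β * (T ℝ (m:ℤ)).eval x)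
          + ∫ x in b..(1:ℝ), (1-x)^α * (1+x)^β * (T ℝ (m:ℤ)).eval x) := by
    rw [modMoment, e1, e2]
  -- tail bounds
  have hexp : ∀ p : ℝ, min α β ≤ p →
      ε^(p+1) ≤ (m:ℝ)^(-2-2*min α β) := by
    intro p hp
    rw [hεdef, heps_pow hm0]
    exact Real.rpow_le_rpow_of_exponent_le hx1 (by linarith)
  have htL : |∫ x in (-1:ℝ)..a, (1-x)^α * (1+x)^β * (T ℝ (m:ℤ)).eval x|
      ≤ max 1 (2^α)/(β+1) * (m:ℝ)^(-2-2*min α β) := by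
    refine (tail_left α β hβ (m:ℤ) ha1 ha0).trans ?_
    rw [show (1:ℝ) + a = ε by rw [hadef]; ring]
    exact mul_le_mul_of_nonneg_left (hexp β hμβ) (div_nonneg hKα (by linarith))
  have htR : |∫ x in b..(1:ℝ), (1-x)^α * (1+x)^β * (T ℝ (m:ℤ)).eval x|
      ≤ max 1 (2^β)/(α+1) * (m:ℝ)^(-2-2*min α β) := by
    refine (tail_right α β hα (m:ℤ) hb0 hb1).trans ?_
    rw [show (1:ℝ) - b = ε by rw [hbdef]; ring]
    exact mul_le_mul_of_nonneg_left (hexp α hμα) (div_nonneg hKβ (by linarith))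
  have htM := mid_bound α β hmin hm
  rw [← hadef, ← hbdef] at htM
  calc |modMoment α β m|
      ≤ |∫ x in (-1:ℝ)..a, (1-x)^α * (1+x)^β * (T ℝ (m:ℤ)).eval x|
        + (|∫ x in a..b, (1-x)^α * (1+x)^β * (T ℝ (m:ℤ)).eval x|
          + |∫ x in b..(1:ℝ), (1-x)^α * (1+x)^β * (T ℝ (m:ℤ)).eval x|) := by
        rw [hsplit]
        exact (abs_add_le _ _).trans (add_le_add_right (abs_add_le _ _) _)
    _ ≤ max 1 (2^α)/(β+1) * (m:ℝ)^(-2-2*min α β)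
        + ((5 * max 1 (2^β) + 5 * max 1 (2^α)
          + (2 * (2^(α-min α β) * (|α| * max 1 (2^β) + |β| * max 1 (2^(β-1))))
              / (-min α β)
            + 3 * (2^(α-min α β) * (|α| * max 1 (2^β) + |β| * max 1 (2^(β-1))))
              / (-(min α β + 1/2)))
          + (2 * (2^(β-min α β) * (|α| * max 1 (2^(α-1)) + |β| * max 1 (2^α)))
              / (-min α β)
            + 3 * (2^(β-min α β) * (|α| * max 1 (2^(α-1)) + |β| * max 1 (2^α)))
              / (-(min α β + 1/2)))) * (m:ℝ)^(-2-2*min α β)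
          + max 1 (2^β)/(α+1) * (m:ℝ)^(-2-2*min α β)) :=
        add_le_add htL (add_le_add htM htR)
    _ = _ := by ring

theorem modMoment_asymptotic (α β : ℝ) (hα : -1 < α) (hβ : -1 < β)
    (hmin : min α β < -(1/2)) :
    ∃ C : ℝ, ∀ m : ℕ, 1 ≤ m →
      |modMoment α β m| ≤ C * (m : ℝ) ^ (-2 - 2 * min α β) := by
  obtain ⟨C, hC0, hC⟩ := ge_two_bound α β hα hβ hmin
  refine ⟨max C |modMoment α β 1|, fun m hm => ?_⟩
  rcases eq_or_lt_of_le hm with h1 | h2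
  · rw [← h1]
    simp only [Nat.cast_one, Real.one_rpow, mul_one]
    exact le_max_right _ _
  · have hm2 : 2 ≤ m := by omega
    refine (hC m hm2).trans ?_
    have : (m:ℝ)^(-2-2*min α β) = (m:ℝ)^(-2 - 2 * min α β) := rfl
    exact mul_le_mul_of_nonneg_right (le_max_left _ _)
      (Real.rpow_nonneg (Nat.cast_nonneg m) _)
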